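/- Let X₁ and X₂ be nontrivial circulant p-graphs on the same vertex set Z_p, with associated groups E₁ and E₂. If E₁ = E₂, then Aut(X₁) = Aut(X₂) as subgroups of the group of permutations of Z_p. -/

import Mathlib

open Finset

noncomputable section CircAux

variable {p : ℕ} [Fact p.Prime]

/-- The space of functions on `ZMod p`. -/
abbrev Vf (p : ℕ) := ZMod p → ZMod p

/-- Translation operator. -/
def Tr (p : ℕ) : Module.End (ZMod p) (Vf p) where
  toFun f := fun x => f (x + 1)
  map_add' _ _ := rfl
  map_smul' _ _ := rfl

/-- Difference operator. -/
def Dl (p : ℕ) : Module.End (ZMod p) (Vf p) := Tr p - 1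

lemma Tr_apply (f : Vf p) (x : ZMod p) : Tr p f x = f (x + 1) := rfl

lemma Dl_apply (f : Vf p) (x : ZMod p) : Dl p f x = f (x + 1) - f x := rfl

lemma Tr_pow_apply (n : ℕ) (f : Vf p) (x : ZMod p) : ((Tr p) ^ n) f x = f (x + n) := by
  induction n generalizing f x with
  | zero => simp
  | succ n ih =>
    rw [pow_succ, Module.End.mul_apply, ih (Tr p f) x, Tr_apply]
    push_cast
    ring_nf

lemma Tr_pow_p : (Tr p) ^ p = 1 := by
  refine LinearMap.ext fun f => funext fun x => ?_
  rw [Tr_pow_apply]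
  simp

instance endCharP : CharP (Module.End (ZMod p) (Vf p)) p := by
  have hinj : Function.Injective (algebraMap (ZMod p) (Module.End (ZMod p) (Vf p))) := by
    intro a b hab
    have := congrFun (congrArg (fun (T : Module.End (ZMod p) (Vf p)) => T (fun _ => 1)) hab) 0
    simpa [Module.algebraMap_end_apply] using this
  exact charP_of_injective_algebraMap hinj p

lemma Dl_pow_p : (Dl p) ^ p = 0 := by
  have h : Commute (Tr p) (1 : Module.End (ZMod p) (Vf p)) := Commute.one_right _
  rw [Dl, sub_pow_char_of_commute p h, Tr_pow_p, one_pow, sub_self]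

/-- `f` has degree at most `j`. -/
def dgle (f : Vf p) (j : ℕ) : Prop := ((Dl p) ^ (j + 1)) f = 0

lemma dgle_mono {f : Vf p} {j j' : ℕ} (h : j ≤ j') (hf : dgle f j) : dgle f j' := by
  unfold dgle at *
  obtain ⟨k, rfl⟩ := Nat.exists_eq_add_of_le h
  rw [add_right_comm, pow_add, Module.End.mul_apply, ← Module.End.mul_apply, ← pow_add,
    add_comm (j + 1) k, pow_add, Module.End.mul_apply, hf, map_zero]

lemma dgle_top (f : Vf p) : dgle f (p - 1) := by
  unfold dgle
  have hp : (p - 1) + 1 = p := Nat.succ_pred_eq_of_pos (Fact.out : p.Prime).pos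
  rw [hp, Dl_pow_p]
  rfl

lemma dgle_zero_fun (j : ℕ) : dgle (0 : Vf p) j := by
  unfold dgle; rw [map_zero]

lemma dgle_add {f g : Vf p} {j : ℕ} (hf : dgle f j) (hg : dgle g j) : dgle (f + g) j := by
  unfold dgle at *; rw [map_add, hf, hg, add_zero]

lemma dgle_smul {f : Vf p} {j : ℕ} (c : ZMod p) (hf : dgle f j) : dgle (c • f) j := by
  unfold dgle at *; rw [map_smul, hf, smul_zero]

lemma dgle_Dl {f : Vf p} {j : ℕ} (hf : dgle f j) : dgle (Dl p f) j := by
  unfold dgle at *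
  rw [← Module.End.mul_apply, ← pow_succ, pow_succ', Module.End.mul_apply, hf, map_zero]

lemma dgle_Dl_pred {f : Vf p} {j : ℕ} (hf : dgle f (j + 1)) : dgle (Dl p f) j := by
  unfold dgle at *
  rw [← Module.End.mul_apply, ← pow_succ]
  exact hf

lemma dgle_of_Dl {f : Vf p} {j : ℕ} (hf : dgle (Dl p f) j) : dgle f (j + 1) := by
  unfold dgle at *
  rw [pow_succ, Module.End.mul_apply]
  exact hf

/-- constant function -/
def cst (p : ℕ) (c : ZMod p) : Vf p := fun _ => c

lemma Dl_cst (c : ZMod p) : Dl p (cst p c) = 0 := by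
  funext x
  show cst p c (x + 1) - cst p c x = 0
  simp [cst]

lemma eq_cst_of_Dl_eq_zero {f : Vf p} (hf : Dl p f = 0) : f = cst p (f 0) := by
  have step : ∀ x : ZMod p, f (x + 1) = f x := by
    intro x
    have h := congrFun hf x
    rw [Dl_apply] at h
    have : f (x + 1) - f x = 0 := h
    exact sub_eq_zero.mp this
  have hn : ∀ n : ℕ, f (n : ZMod p) = f 0 := by
    intro n
    induction n with
    | zero => simp
    | succ n ih => push_cast; rw [step, ih]
  haveI : NeZero p := ⟨(Fact.out : p.Prime).ne_zero⟩
  funext x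
  have hx : ((x.val : ℕ) : ZMod p) = x := ZMod.natCast_rightInverse x
  rw [← hx, hn]
  rfl

lemma dgle_zero_iff {f : Vf p} : dgle f 0 ↔ ∃ c, f = cst p c := by
  constructor
  · intro h
    exact ⟨f 0, eq_cst_of_Dl_eq_zero (by simpa [dgle, pow_one] using h)⟩
  · rintro ⟨c, rfl⟩
    show ((Dl p) ^ 1) (cst p c) = 0
    rw [pow_one, Dl_cst]


open Classical in
/-- degree of a function -/
noncomputable def dg (f : Vf p) : ℕ := Nat.find ⟨p - 1, dgle_top f⟩

open Classical in
lemma dg_spec (f : Vf p) : dgle f (dg f) := Nat.find_spec (⟨p - 1, dgle_top f⟩ : ∃ j, dgle f j)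

open Classical in
lemma dg_min {f : Vf p} {j : ℕ} (h : j < dg f) : ¬ dgle f j := Nat.find_min _ h

lemma dgle_iff_dg_le {f : Vf p} {j : ℕ} : dgle f j ↔ dg f ≤ j := by
  constructor
  · intro h
    by_contra hc
    exact dg_min (Nat.lt_of_not_le hc) h
  · intro h
    exact dgle_mono h (dg_spec f)

lemma dg_le_top (f : Vf p) : dg f ≤ p - 1 := dgle_iff_dg_le.mp (dgle_top f)

lemma dg_Dl_of_pos {f : Vf p} (h : 1 ≤ dg f) : dg (Dl p f) = dg f - 1 := by
  have h1 : dgle (Dl p f) (dg f - 1) := by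
    have hf : dgle f ((dg f - 1) + 1) := by
      rw [Nat.sub_add_cancel h]; exact dg_spec f
    exact dgle_Dl_pred hf
  have h1' : dg (Dl p f) ≤ dg f - 1 := dgle_iff_dg_le.mp h1
  rcases Nat.lt_or_ge (dg f) 2 with h2 | h2
  · omega
  · have h3 : ¬ dgle (Dl p f) (dg f - 2) := by
      intro hc
      have : dgle f ((dg f - 2) + 1) := dgle_of_Dl hc
      exact dg_min (by omega) this
    have h3' : ¬ (dg (Dl p f) ≤ dg f - 2) := fun hle => h3 (dgle_iff_dg_le.mpr hle)
    omega

/-- Falling factorial function. -/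
def ph (p : ℕ) (a : ℕ) : Vf p := fun x => ∏ t ∈ Finset.range a, (x - (t : ZMod p))

lemma ph_zero : ph p 0 = cst p 1 := by
  funext x; simp [ph, cst]

lemma Dl_ph (a : ℕ) : Dl p (ph p (a + 1)) = ((a : ZMod p) + 1) • ph p a := by
  funext x
  rw [Dl_apply]
  show (∏ t ∈ Finset.range (a + 1), (x + 1 - (t : ZMod p)))
      - (∏ t ∈ Finset.range (a + 1), (x - (t : ZMod p))) = _
  have hL : (∏ t ∈ Finset.range (a + 1), (x + 1 - (t : ZMod p)))
      = (x + 1) * ∏ t ∈ Finset.range a, (x - (t : ZMod p)) := by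
    rw [Finset.prod_range_succ' (fun t => (x + 1 - (t : ZMod p))) a]
    have : ∀ t : ℕ, x + 1 - ((t + 1 : ℕ) : ZMod p) = x - (t : ZMod p) := by
      intro t; push_cast; ring
    rw [Finset.prod_congr rfl (fun t _ => this t)]
    push_cast; ring
  have hR : (∏ t ∈ Finset.range (a + 1), (x - (t : ZMod p)))
      = (∏ t ∈ Finset.range a, (x - (t : ZMod p))) * (x - (a : ZMod p)) := by
    rw [Finset.prod_range_succ]
  rw [hL, hR]
  show _ = ((a : ZMod p) + 1) * ∏ t ∈ Finset.range a, (x - (t : ZMod p))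
  ring

lemma Dl_pow_ph_self (a : ℕ) : ((Dl p) ^ a) (ph p a) = (a.factorial : ZMod p) • cst p 1 := by
  induction a with
  | zero => simp [ph_zero]
  | succ a ih =>
    have : ((Dl p) ^ (a + 1)) (ph p (a + 1)) = ((Dl p) ^ a) (Dl p (ph p (a + 1))) := by
      rw [pow_succ, Module.End.mul_apply]
    rw [this, Dl_ph, map_smul, ih, smul_smul]
    congr 1
    push_cast [Nat.factorial_succ]
    ring

lemma factorial_ne_zero_zmod {a : ℕ} (ha : a ≤ p - 1) : (a.factorial : ZMod p) ≠ 0 := by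
  haveI : NeZero p := ⟨(Fact.out : p.Prime).ne_zero⟩
  rw [Ne, ZMod.natCast_eq_zero_iff]
  rw [(Fact.out : p.Prime).dvd_factorial]
  have := (Fact.out : p.Prime).two_le
  omega

lemma cst_one_ne_zero : (cst p 1 : Vf p) ≠ 0 := by
  intro h
  have := congrFun h 0
  simp only [cst, Pi.zero_apply] at this
  exact one_ne_zero this

lemma dgle_ph (a : ℕ) : dgle (ph p a) a := by
  unfold dgle
  have : ((Dl p) ^ (a + 1)) (ph p a) = Dl p (((Dl p) ^ a) (ph p a)) := by
    rw [pow_succ', Module.End.mul_apply]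
  rw [this, Dl_pow_ph_self, map_smul, Dl_cst, smul_zero]

lemma dg_ph {a : ℕ} (ha : a ≤ p - 1) : dg (ph p a) = a := by
  have h1 : dg (ph p a) ≤ a := dgle_iff_dg_le.mp (dgle_ph a)
  rcases Nat.eq_zero_or_pos a with rfl | hpos
  · omega
  have h2 : ¬ dgle (ph p a) (a - 1) := by
    intro hc
    have : ((Dl p) ^ a) (ph p a) = 0 := by
      have := hc
      unfold dgle at this
      rwa [Nat.sub_add_cancel hpos] at this
    rw [Dl_pow_ph_self] at this
    exact (smul_ne_zero (factorial_ne_zero_zmod ha) cst_one_ne_zero) this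
  have h2' : ¬ (dg (ph p a) ≤ a - 1) := fun hle => h2 (dgle_iff_dg_le.mpr hle)
  omega

lemma ph_ne_zero {a : ℕ} (ha : a ≤ p - 1) : ph p a ≠ 0 := by
  intro h
  have h1 := Dl_pow_ph_self (p := p) a
  rw [h, map_zero] at h1
  exact (smul_ne_zero (factorial_ne_zero_zmod ha) cst_one_ne_zero) h1.symm

/-- Key saturation lemma: a subspace-like predicate closed under `Dl` containing an
element of degree `w` contains everything of degree at most `w`. -/
lemma saturation {S : Vf p → Prop}
    (hadd : ∀ f g, S f → S g → S (f + g))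
    (hsmul : ∀ (c : ZMod p) f, S f → S (c • f))
    (hD : ∀ f, S f → S (Dl p f)) :
    ∀ w : ℕ, ∀ h : Vf p, h ≠ 0 → S h → dg h = w → ∀ f, dgle f w → S f := by
  intro w
  induction w with
  | zero =>
    intro h hne hS hdg f hf
    have hhc : h = cst p (h 0) := by
      have : dgle h 0 := hdg ▸ dg_spec h
      exact eq_cst_of_Dl_eq_zero (by simpa [dgle, pow_one] using this)
    have hfc : f = cst p (f 0) :=
      eq_cst_of_Dl_eq_zero (by simpa [dgle, pow_one] using hf)
    have h0ne : h 0 ≠ 0 := by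
      intro hh
      apply hne
      rw [hhc, hh]; funext x; rfl
    have : f = (f 0 * (h 0)⁻¹) • h := by
      rw [hfc]
      funext x
      show f 0 = (f 0 * (h 0)⁻¹) * h x
      conv_rhs => rw [show h x = h 0 from by rw [hhc]; rfl]
      field_simp
    rw [this]
    exact hsmul _ _ hS
  | succ w ih =>
    intro h hne hS hdg f hf
    -- leading coefficients
    have hhw : dgle h (w + 1) := hdg ▸ dg_spec h
    have hDh : ((Dl p) ^ (w + 1)) h ≠ 0 := by
      intro hc
      have hww : dgle h w := hc
      exact dg_min (by omega) hww
    have hconst : ∀ g : Vf p, dgle g (w + 1) →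
        ((Dl p) ^ (w + 1)) g = cst p (((Dl p) ^ (w + 1)) g 0) := by
      intro g hg
      apply eq_cst_of_Dl_eq_zero
      have : ((Dl p) ^ (w + 1 + 1)) g = 0 := hg
      calc Dl p (((Dl p) ^ (w + 1)) g) = ((Dl p) ^ (w + 1 + 1)) g := by
            rw [pow_succ' (Dl p) (w + 1)]; rfl
        _ = 0 := this
    set ch := ((Dl p) ^ (w + 1)) h 0 with hch
    have hchne : ch ≠ 0 := by
      intro hc
      apply hDh
      rw [hconst h hhw, ← hch, hc]
      funext x; rfl
    set cf := ((Dl p) ^ (w + 1)) f 0 with hcf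
    set g := f - (cf * ch⁻¹) • h with hg
    have hgdeg : dgle g w := by
      have : ((Dl p) ^ (w + 1)) g = 0 := by
        rw [hg, map_sub, map_smul, hconst h hhw, hconst f hf, ← hch, ← hcf]
        funext x
        show cf - (cf * ch⁻¹) * ch = 0
        field_simp
        ring
      rcases Nat.eq_zero_or_pos w with rfl | hw
      · -- need dgle g 0, i.e. Dl^1 g = 0
        unfold dgle; simpa using this
      · have h2 : dgle g ((w - 1) + 1) := by
          unfold dgle; rwa [Nat.sub_add_cancel hw]
        exact dgle_mono (by omega) (h2 : dgle g (w - 1 + 1))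
    -- apply ih with h := Dl h
    have hDlh_ne : Dl p h ≠ 0 := by
      intro hc
      apply hDh
      calc ((Dl p) ^ (w + 1)) h = ((Dl p) ^ w) (Dl p h) := by
            rw [pow_succ, Module.End.mul_apply]
        _ = 0 := by rw [hc, map_zero]
    have hdgDl : dg (Dl p h) = w := by
      have := dg_Dl_of_pos (f := h) (by omega)
      omega
    have hgS : S g := ih (Dl p h) hDlh_ne (hD h hS) hdgDl g hgdeg
    have : f = g + (cf * ch⁻¹) • h := by rw [hg]; ring
    rw [this]
    exact hadd _ _ hgS (hsmul _ _ hS)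

lemma Dl_mul (f g : Vf p) : Dl p (f * g) = (Dl p f) * (Tr p g) + f * (Dl p g) := by
  funext x
  show (f * g) (x + 1) - (f * g) x = (f (x+1) - f x) * g (x+1) + f x * (g (x+1) - g x)
  show f (x+1) * g (x+1) - f x * g x = _
  ring

lemma dgle_Tr {f : Vf p} {j : ℕ} (hf : dgle f j) : dgle (Tr p f) j := by
  unfold dgle at *
  have hcomm : (Dl p) ^ (j + 1) * Tr p = Tr p * (Dl p) ^ (j + 1) := by
    apply Commute.pow_left
    show Tr p * Dl p = Dl p * Tr p  -- Commute (Dl p) (Tr p) : Dl * Tr = Tr * Dl?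
    simp [Dl, mul_sub, sub_mul]
  calc ((Dl p) ^ (j + 1)) (Tr p f) = ((Dl p) ^ (j + 1) * Tr p) f := rfl
    _ = (Tr p * (Dl p) ^ (j + 1)) f := by rw [hcomm]
    _ = Tr p (((Dl p) ^ (j + 1)) f) := rfl
    _ = 0 := by rw [hf, map_zero]

lemma dgle_mul : ∀ n : ℕ, ∀ a b : ℕ, ∀ f g : Vf p, a + b ≤ n →
    dgle f a → dgle g b → dgle (f * g) (a + b) := by
  intro n
  induction n with
  | zero =>
    intro a b f g hab hf hg
    have : a = 0 ∧ b = 0 := by omega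
    obtain ⟨rfl, rfl⟩ := this
    obtain ⟨c, rfl⟩ := dgle_zero_iff.mp hf
    obtain ⟨d, rfl⟩ := dgle_zero_iff.mp hg
    have : (cst p c) * (cst p d) = cst p (c * d) := rfl
    rw [this]
    exact dgle_zero_iff.mpr ⟨_, rfl⟩
  | succ n ihn =>
    intro a b f g hab hf hg
    rcases Nat.eq_zero_or_pos (a + b) with hz | hpos
    · have : a = 0 ∧ b = 0 := by omega
      obtain ⟨rfl, rfl⟩ := this
      exact ihn 0 0 f g (by omega) hf hg
    -- show dgle (Dl (f*g)) (a + b - 1)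
    have key : dgle (Dl p (f * g)) (a + b - 1) := by
      rw [Dl_mul]
      apply dgle_add
      · -- (Dl f) * (Tr g) : if a = 0 then Dl f = 0
        rcases Nat.eq_zero_or_pos a with rfl | ha
        · obtain ⟨c, rfl⟩ := dgle_zero_iff.mp hf
          rw [Dl_cst]
          rw [zero_mul]
          exact dgle_zero_fun _
        · have h1 : dgle (Dl p f) (a - 1) := by
            have : dgle f ((a - 1) + 1) := by rwa [Nat.sub_add_cancel ha]
            exact dgle_Dl_pred this
          have h2 : dgle (Tr p g) b := dgle_Tr hg
          have := ihn (a - 1) b (Dl p f) (Tr p g) (by omega) h1 h2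
          exact dgle_mono (by omega) this
      · rcases Nat.eq_zero_or_pos b with rfl | hb
        · obtain ⟨c, rfl⟩ := dgle_zero_iff.mp hg
          rw [Dl_cst]
          rw [mul_zero]
          exact dgle_zero_fun _
        · have h1 : dgle (Dl p g) (b - 1) := by
            have : dgle g ((b - 1) + 1) := by rwa [Nat.sub_add_cancel hb]
            exact dgle_Dl_pred this
          have := ihn a (b - 1) f (Dl p g) (by omega) hf h1
          exact dgle_mono (by omega) this
    have : dgle (f * g) ((a + b - 1) + 1) := dgle_of_Dl key
    rwa [Nat.sub_add_cancel hpos] at this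

lemma dgle_mul' {a b : ℕ} {f g : Vf p} (hf : dgle f a) (hg : dgle g b) :
    dgle (f * g) (a + b) := dgle_mul (a + b) a b f g le_rfl hf hg

/-- shift of a function -/
def shf (p : ℕ) (c : ZMod p) (f : Vf p) : Vf p := fun x => f (x - c)

lemma Dl_shf (c : ZMod p) (f : Vf p) : Dl p (shf p c f) = shf p c (Dl p f) := by
  funext x
  show f (x + 1 - c) - f (x - c) = f (x - c + 1) - f (x - c)
  ring_nf

lemma dgle_shf {f : Vf p} {j : ℕ} (c : ZMod p) (hf : dgle f j) : dgle (shf p c f) j := by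
  unfold dgle at *
  have key : ∀ n : ℕ, ((Dl p) ^ n) (shf p c f) = shf p c (((Dl p) ^ n) f) := by
    intro n
    induction n with
    | zero => rfl
    | succ n ihn =>
      have e1 : ((Dl p) ^ (n + 1)) (shf p c f) = Dl p (((Dl p) ^ n) (shf p c f)) := by
        rw [pow_succ' (Dl p) n]; rfl
      have e2 : ((Dl p) ^ (n + 1)) f = Dl p (((Dl p) ^ n) f) := by
        rw [pow_succ' (Dl p) n]; rfl
      rw [e1, ihn, Dl_shf, ← e2]
  rw [key, hf]
  funext x
  rfl

lemma ph_mul (a b : ℕ) : ph p (a + b) = ph p a * shf p (a : ZMod p) (ph p b) := by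
  funext x
  show ∏ t ∈ Finset.range (a + b), (x - (t : ZMod p)) = _
  rw [Finset.prod_range_add (fun t => (x - (t : ZMod p))) a b]
  congr 1
  show ∏ t ∈ Finset.range b, (x - ((a + t : ℕ) : ZMod p)) = ∏ t ∈ Finset.range b, (x - (a : ZMod p) - (t : ZMod p))
  apply Finset.prod_congr rfl
  intro t _
  push_cast
  ring

/-- `σ` is an automorphism of the graph `X`. -/
def IsCircAut' {p : ℕ} (X : SimpleGraph (ZMod p)) (σ : Equiv.Perm (ZMod p)) : Prop :=
  ∀ i j : ZMod p, X.Adj (σ i) (σ j) ↔ X.Adj i j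

section Graph

set_option linter.unusedSectionVars false

variable (S : Set (ZMod p))

/-- connection set as a finset -/
noncomputable def Sfin (S : Set (ZMod p)) : Finset (ZMod p) :=
  haveI : NeZero p := ⟨(Fact.out : p.Prime).ne_zero⟩
  (Set.toFinite S).toFinset

lemma mem_Sfin {s : ZMod p} : s ∈ Sfin S ↔ s ∈ S := Set.Finite.mem_toFinset _

/-- adjacency operator -/
noncomputable def Aop (S : Set (ZMod p)) : Module.End (ZMod p) (Vf p) where
  toFun f := fun x => ∑ s ∈ Sfin S, f (x + s)
  map_add' f g := by funext x; simp [Finset.sum_add_distrib]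
  map_smul' c f := by funext x; simp [Finset.mul_sum]

/-- normalized adjacency operator -/
noncomputable def Bop (S : Set (ZMod p)) : Module.End (ZMod p) (Vf p) :=
  Aop S - (((Sfin S).card : ZMod p) • (1 : Module.End (ZMod p) (Vf p)))

lemma Aop_apply (f : Vf p) (x : ZMod p) : Aop S f x = ∑ s ∈ Sfin S, f (x + s) := rfl

lemma Bop_apply (f : Vf p) (x : ZMod p) :
    Bop S f x = (∑ s ∈ Sfin S, f (x + s)) - ((Sfin S).card : ZMod p) * f x := by
  rw [Bop, LinearMap.sub_apply]
  show Aop S f x - (((Sfin S).card : ZMod p) • f) x = _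
  rw [Aop_apply]
  congr 1

lemma Bop_cst (c : ZMod p) : Bop S (cst p c) = 0 := by
  funext x
  rw [Bop_apply]
  show (∑ _s ∈ Sfin S, c) - ((Sfin S).card : ZMod p) * c = 0
  rw [Finset.sum_const, nsmul_eq_mul, sub_self]

lemma Bop_Tr_comm : Bop S * Tr p = Tr p * Bop S := by
  have hA : Aop S * Tr p = Tr p * Aop S := by
    refine LinearMap.ext fun f => funext fun x => ?_
    show ∑ s ∈ Sfin S, f (x + s + 1) = ∑ s ∈ Sfin S, f (x + 1 + s)
    apply Finset.sum_congr rfl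
    intro s _
    ring_nf
  show (Aop S - _) * Tr p = Tr p * (Aop S - _)
  rw [sub_mul, mul_sub, hA, smul_mul_assoc, one_mul, mul_smul_comm, mul_one]

lemma Bop_Dl_comm : Bop S * Dl p = Dl p * Bop S := by
  rw [Dl, mul_sub, sub_mul, Bop_Tr_comm S, mul_one, one_mul]

lemma Bop_Dl_pow_comm (n : ℕ) : Bop S * (Dl p) ^ n = (Dl p) ^ n * Bop S :=
  (Commute.pow_right (Bop_Dl_comm S) n)

lemma Bop_Dl_apply (f : Vf p) : Bop S (Dl p f) = Dl p (Bop S f) := by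
  have := congrFun (congrArg (fun (T : Module.End (ZMod p) (Vf p)) => T.toFun) (Bop_Dl_comm S)) f
  exact this

lemma Bop_Dl_pow_apply (n : ℕ) (f : Vf p) :
    Bop S (((Dl p) ^ n) f) = ((Dl p) ^ n) (Bop S f) := by
  have := congrFun (congrArg (fun (T : Module.End (ZMod p) (Vf p)) => T.toFun) (Bop_Dl_pow_comm S n)) f
  exact this

variable (X : SimpleGraph (ZMod p))

/-- the graph hypotheses bundle -/
lemma zero_not_mem_S (hS : ∀ i j : ZMod p, X.Adj i j ↔ j - i ∈ S) : (0 : ZMod p) ∉ S := by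
  intro h0
  have : X.Adj 0 0 := (hS 0 0).mpr (by simpa using h0)
  exact X.irrefl this

lemma neg_mem_S (hS : ∀ i j : ZMod p, X.Adj i j ↔ j - i ∈ S) {s : ZMod p} (hs : s ∈ S) :
    -s ∈ S := by
  have h1 : X.Adj 0 s := (hS 0 s).mpr (by simpa using hs)
  have h2 : X.Adj s 0 := h1.symm
  have := (hS s 0).mp h2
  simpa using this

/-- delta function at 0 -/
def dta (p : ℕ) : Vf p := fun x => if x = 0 then 1 else 0

lemma Bop_dta_ne_zero (hS : ∀ i j : ZMod p, X.Adj i j ↔ j - i ∈ S) (hne : S.Nonempty) :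
    Bop S (dta p) ≠ 0 := by
  obtain ⟨s₀, hs₀⟩ := hne
  have hs₀0 : s₀ ≠ 0 := fun h => zero_not_mem_S S X hS (h ▸ hs₀)
  intro hB
  have := congrFun hB s₀
  rw [Bop_apply] at this
  simp only [Pi.zero_apply] at this
  have hsum : ∑ s ∈ Sfin S, dta p (s₀ + s) = 1 := by
    rw [Finset.sum_eq_single (-s₀)]
    · simp [dta]
    · intro b hb hbne
      simp only [dta, ite_eq_right_iff]
      intro hb0
      exact absurd (by linear_combination hb0 : b = -s₀) hbne
    · intro hnot
      exact absurd ((mem_Sfin S).mpr (neg_mem_S S X hS hs₀)) hnot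
  rw [hsum] at this
  have hdta0 : dta p s₀ = 0 := by simp [dta, hs₀0]
  rw [hdta0, mul_zero, sub_zero] at this
  exact one_ne_zero this

/-- commutation with automorphisms -/
lemma Bop_comp (hS : ∀ i j : ZMod p, X.Adj i j ↔ j - i ∈ S)
    {σ : Equiv.Perm (ZMod p)} (hσ : ∀ i j : ZMod p, X.Adj (σ i) (σ j) ↔ X.Adj i j)
    (f : Vf p) : Bop S (fun x => f (σ x)) = fun x => (Bop S f) (σ x) := by
  funext x
  rw [Bop_apply, Bop_apply]
  congr 1
  -- ∑ s ∈ Sfin S, f (σ (x + s)) = ∑ s ∈ Sfin S, f (σ x + s)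
  have hmem : ∀ y s : ZMod p, s ∈ S ↔ σ (y + s) - σ y ∈ S := by
    intro y s
    have h1 : X.Adj y (y + s) ↔ s ∈ S := by rw [hS]; simp
    have h2 : X.Adj (σ y) (σ (y + s)) ↔ σ (y + s) - σ y ∈ S := hS _ _
    rw [← h2, hσ, h1]
  refine Finset.sum_nbij' (fun s => σ (x + s) - σ x) (fun t => σ.symm (σ x + t) - x) ?_ ?_ ?_ ?_ ?_
  · intro s hs
    exact (mem_Sfin S).mpr ((hmem x s).mp ((mem_Sfin S).mp hs))
  · intro t ht
    apply (mem_Sfin S).mpr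
    apply (hmem x (σ.symm (σ x + t) - x)).mpr
    have : x + (σ.symm (σ x + t) - x) = σ.symm (σ x + t) := by ring
    rw [this, Equiv.apply_symm_apply]
    simpa using (mem_Sfin S).mp ht
  · intro s _
    show σ.symm (σ x + (σ (x + s) - σ x)) - x = s
    have : σ x + (σ (x + s) - σ x) = σ (x + s) := by ring
    rw [this, Equiv.symm_apply_apply]
    ring
  · intro t _
    show σ (x + (σ.symm (σ x + t) - x)) - σ x = t
    have : x + (σ.symm (σ x + t) - x) = σ.symm (σ x + t) := by ring
    rw [this, Equiv.apply_symm_apply]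
    ring
  · intro s _
    show f (σ (x + s)) = f (σ x + (σ (x + s) - σ x))
    have : σ x + (σ (x + s) - σ x) = σ (x + s) := by ring
    rw [this]

open Classical in
lemma Aop_dta_sum (x : ZMod p) :
    ∑ s ∈ Sfin S, dta p (x + s) = if -x ∈ S then 1 else 0 := by
  by_cases hx : -x ∈ S
  · rw [if_pos hx]
    rw [Finset.sum_eq_single (-x)]
    · simp [dta]
    · intro b hb hbne
      simp only [dta, ite_eq_right_iff]
      intro hb0
      exact absurd (by linear_combination hb0 : b = -x) hbne
    · intro hnot
      exact absurd ((mem_Sfin S).mpr hx) hnot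
  · rw [if_neg hx]
    apply Finset.sum_eq_zero
    intro s hs
    simp only [dta, ite_eq_right_iff]
    intro h0
    exact absurd (show -x ∈ S from by
      have : s = -x := by linear_combination h0
      exact this ▸ (mem_Sfin S).mp hs) hx

open Classical in
lemma dta_sum_ne (hS : ∀ i j : ZMod p, X.Adj i j ↔ j - i ∈ S) (x : ZMod p) (hx : x ≠ 0) :
    Bop S (dta p) x = if -x ∈ S then 1 else 0 := by
  rw [Bop_apply, Aop_dta_sum]
  have : dta p x = 0 := by simp [dta, hx]
  rw [this, mul_zero, sub_zero]

lemma exists_m (hS : ∀ i j : ZMod p, X.Adj i j ↔ j - i ∈ S) (hne : S.Nonempty) :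
    ∃ m : ℕ, 1 ≤ m ∧ m ≤ p - 1 ∧
      (∀ f : Vf p, Bop S f = 0 ↔ dgle f (m - 1)) ∧
      (∀ f : Vf p, dgle (Bop S f) 0 ↔ dgle f m) ∧
      Bop S (ph p m) ≠ 0 := by
  haveI : DecidablePred (fun j => Bop S (ph p j) ≠ 0) := Classical.decPred _
  have hBdta := Bop_dta_ne_zero S X hS hne
  -- existence of a ph not killed
  have hex2 : ∃ j, j ≤ p - 1 ∧ Bop S (ph p j) ≠ 0 := by
    by_contra hc
    push_neg at hc
    have hall : ∀ f : Vf p, dgle f (p - 1) → Bop S f = 0 := by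
      apply saturation (S := fun f => Bop S f = 0)
        (fun f g hf hg => by show Bop S (f + g) = 0; rw [map_add]; rw [show Bop S f = 0 from hf, show Bop S g = 0 from hg, add_zero])
        (fun c f hf => by show Bop S (c • f) = 0; rw [map_smul, show Bop S f = 0 from hf, smul_zero])
        (fun f hf => by show Bop S (Dl p f) = 0; rw [Bop_Dl_apply, show Bop S f = 0 from hf, map_zero])
        (p - 1) (ph p (p - 1)) (ph_ne_zero le_rfl) (hc _ le_rfl) (dg_ph le_rfl)
    exact hBdta (hall (dta p) (dgle_top _))
  obtain ⟨j0, hj0le, hj0⟩ := hex2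
  have hex : ∃ j, Bop S (ph p j) ≠ 0 := ⟨j0, hj0⟩
  set m := Nat.find hex with hm
  have hmspec : Bop S (ph p m) ≠ 0 := Nat.find_spec hex
  have hmin : ∀ j, j < m → Bop S (ph p j) = 0 := by
    intro j hj
    by_contra hc
    exact absurd (Nat.find_min' hex hc) (by omega)
  have hmle : m ≤ p - 1 := le_trans (Nat.find_min' hex hj0) hj0le
  have hm1 : 1 ≤ m := by
    rcases Nat.eq_zero_or_pos m with h0 | h; swap
    · exact h
    · exfalso
      apply hmspec
      rw [h0, ph_zero, Bop_cst]
  -- kernel characterization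
  have hker : ∀ f : Vf p, Bop S f = 0 ↔ dgle f (m - 1) := by
    intro f
    constructor
    · intro hBf
      by_contra hc
      have hfne : f ≠ 0 := by
        intro h0; rw [h0] at hc; exact hc (dgle_zero_fun _)
      have hge : m ≤ dg f := by
        have : ¬ dg f ≤ m - 1 := fun hle => hc (dgle_iff_dg_le.mpr hle)
        omega
      have hall := saturation (S := fun g => Bop S g = 0)
        (fun f g hf hg => by show Bop S (f + g) = 0; rw [map_add]; rw [show Bop S f = 0 from hf, show Bop S g = 0 from hg, add_zero])
        (fun c f hf => by show Bop S (c • f) = 0; rw [map_smul, show Bop S f = 0 from hf, smul_zero])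
        (fun f hf => by show Bop S (Dl p f) = 0; rw [Bop_Dl_apply, show Bop S f = 0 from hf, map_zero])
        (dg f) f hfne hBf rfl
      exact hmspec (hall (ph p m) (dgle_mono hge (dgle_ph m)))
    · intro hf
      have hall := saturation (S := fun g => Bop S g = 0)
        (fun f g hf hg => by show Bop S (f + g) = 0; rw [map_add]; rw [show Bop S f = 0 from hf, show Bop S g = 0 from hg, add_zero])
        (fun c f hf => by show Bop S (c • f) = 0; rw [map_smul, show Bop S f = 0 from hf, smul_zero])
        (fun f hf => by show Bop S (Dl p f) = 0; rw [Bop_Dl_apply, show Bop S f = 0 from hf, map_zero])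
        (m - 1) (ph p (m - 1)) (ph_ne_zero (by omega)) (hmin _ (by omega)) (dg_ph (by omega))
      exact hall f hf
  refine ⟨m, hm1, hmle, hker, ?_, hmspec⟩
  -- constant characterization
  intro f
  constructor
  · intro hBf
    by_contra hc
    have h1 : ¬ dgle (Dl p f) (m - 1) := by
      intro hD
      have : dgle f ((m - 1) + 1) := dgle_of_Dl hD
      rw [Nat.sub_add_cancel hm1] at this
      exact hc this
    have h2 : Bop S (Dl p f) ≠ 0 := fun h => h1 ((hker _).mp h)
    apply h2
    rw [Bop_Dl_apply]
    have : Dl p (Bop S f) = ((Dl p) ^ (0 + 1)) (Bop S f) := by rw [pow_one]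
    rw [this]
    exact hBf
  · intro hf
    have hall := saturation (S := fun g => dgle (Bop S g) 0)
      (fun f g hf hg => by show dgle (Bop S (f + g)) 0; rw [map_add]; exact dgle_add hf hg)
      (fun c f hf => by show dgle (Bop S (c • f)) 0; rw [map_smul]; exact dgle_smul c hf)
      (fun f hf => by
        show dgle (Bop S (Dl p f)) 0
        rw [Bop_Dl_apply]
        show ((Dl p) ^ (0 + 1)) (Dl p (Bop S f)) = 0
        rw [pow_one]
        have : Dl p (Bop S f) = 0 := by
          have := hf
          unfold dgle at this
          rwa [pow_one] at this
        rw [this, map_zero])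
      m (ph p m) (ph_ne_zero hmle) ?_ (dg_ph hmle)
    · exact hall f hf
    · -- dgle (Bop S (ph p m)) 0
      show ((Dl p) ^ (0 + 1)) (Bop S (ph p m)) = 0
      rw [pow_one, ← Bop_Dl_apply]
      have hphm : ph p m = ph p ((m - 1) + 1) := by rw [Nat.sub_add_cancel hm1]
      rw [hphm, Dl_ph, map_smul, hmin _ (by omega), smul_zero]

lemma dgle_sub {f g : Vf p} {j : ℕ} (hf : dgle f j) (hg : dgle g j) : dgle (f - g) j := by
  have : f - g = f + (-1 : ZMod p) • g := by funext x; show f x - g x = f x + (-1) * g x; ring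
  rw [this]
  exact dgle_add hf (dgle_smul _ hg)

lemma dgle_Tr_pow {f : Vf p} {j : ℕ} (n : ℕ) (hf : dgle f j) : dgle (((Tr p) ^ n) f) j := by
  induction n with
  | zero => simpa using hf
  | succ n ihn =>
    have : ((Tr p) ^ (n + 1)) f = Tr p (((Tr p) ^ n) f) := by
      rw [pow_succ' (Tr p) n]; rfl
    rw [this]
    exact dgle_Tr ihn

lemma isCircAut_inv {X : SimpleGraph (ZMod p)} {σ : Equiv.Perm (ZMod p)}
    (hσ : IsCircAut' X σ) : IsCircAut' X σ⁻¹ := by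
  intro i j
  have := hσ (σ⁻¹ i) (σ⁻¹ j)
  simpa using this.symm

lemma inv_sub (X : SimpleGraph (ZMod p)) {i i' : ℕ} (h1 : 1 ≤ i') (hii : i' < i)
    (hip : i ≤ p - 2)
    (Hi : ∀ σ : Equiv.Perm (ZMod p), IsCircAut' X σ →
      ∀ f : Vf p, dgle f i → dgle (fun x => f (σ x)) i)
    (Hi' : ∀ σ : Equiv.Perm (ZMod p), IsCircAut' X σ →
      ∀ f : Vf p, dgle f i' → dgle (fun x => f (σ x)) i') :
    ∀ σ : Equiv.Perm (ZMod p), IsCircAut' X σ →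
      ∀ f : Vf p, dgle f (i - i') → dgle (fun x => f (σ x)) (i - i') := by
  have hp2 : 2 ≤ p := (Fact.out : p.Prime).two_le
  intro σ hσ f hf
  by_contra hnd
  set h : Vf p := fun x => f (σ x) with hh
  have hT : ∀ g : Vf p, dgle g i' → dgle (h * g) i := by
    intro g hg
    have hgσ : dgle (fun x => g (σ⁻¹ x)) i' := Hi' σ⁻¹ (isCircAut_inv hσ) g hg
    have hfg : dgle (f * (fun x => g (σ⁻¹ x))) (i - i' + i') := dgle_mul' hf hgσ
    rw [Nat.sub_add_cancel (le_of_lt hii)] at hfg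
    have hres := Hi σ hσ _ hfg
    have : (fun x => (f * (fun y => g (σ⁻¹ y))) (σ x)) = h * g := by
      funext x
      show f (σ x) * g (σ⁻¹ (σ x)) = f (σ x) * g x
      congr 1
      simp
    rwa [this] at hres
  -- h belongs to the "transporter" predicate; saturate
  have hne : h ≠ 0 := fun h0 => hnd (h0 ▸ dgle_zero_fun _)
  have he : i - i' + 1 ≤ dg h := by
    have : ¬ (dg h ≤ i - i') := fun hle => hnd (dgle_iff_dg_le.mpr hle)
    omega
  have hsat := saturation (S := fun h' : Vf p => ∀ g : Vf p, dgle g i' → dgle (h' * g) i)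
    (fun f₁ f₂ hf₁ hf₂ => by
      intro g hg
      have : (f₁ + f₂) * g = f₁ * g + f₂ * g := add_mul _ _ _
      rw [this]
      exact dgle_add (hf₁ g hg) (hf₂ g hg))
    (fun c f₁ hf₁ => by
      intro g hg
      have : (c • f₁) * g = c • (f₁ * g) := smul_mul_assoc c f₁ g
      rw [this]
      exact dgle_smul c (hf₁ g hg))
    (fun f₁ hf₁ => by
      intro g hg
      set u : Vf p := ((Tr p) ^ (p - 1)) g with hu
      have hTru : Tr p u = g := by
        have : Tr p (((Tr p) ^ (p - 1)) g) = ((Tr p) ^ ((p - 1) + 1)) g := by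
          rw [pow_succ' (Tr p) (p - 1)]; rfl
        rw [hu, this, Nat.sub_add_cancel (by omega : 1 ≤ p), Tr_pow_p]
        rfl
      have hid : (Dl p f₁) * g = Dl p (f₁ * u) - f₁ * (Dl p u) := by
        rw [Dl_mul, hTru]; ring
      rw [hid]
      apply dgle_sub
      · exact dgle_Dl (hf₁ u (dgle_Tr_pow (p - 1) hg))
      · exact hf₁ (Dl p u) (dgle_Dl (dgle_Tr_pow (p - 1) hg)))
    (dg h) h hne hT rfl
  have hph : ∀ g : Vf p, dgle g i' → dgle ((ph p (i - i' + 1)) * g) i :=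
    hsat _ (dgle_mono he (dgle_ph _))
  have hgsh : dgle (shf p ((i - i' + 1 : ℕ) : ZMod p) (ph p i')) i' :=
    dgle_shf _ (dgle_ph i')
  have hprod := hph _ hgsh
  rw [← ph_mul (i - i' + 1) i'] at hprod
  have harith : (i - i' + 1) + i' = i + 1 := by omega
  rw [harith] at hprod
  have : dg (ph p (i + 1)) ≤ i := dgle_iff_dg_le.mp hprod
  rw [dg_ph (by omega)] at this
  omega

/-- Every automorphism of a nontrivial circulant `p`-graph is affine. -/
lemma aut_affine (hS : ∀ i j : ZMod p, X.Adj i j ↔ j - i ∈ S)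
    (hne : S.Nonempty) (hnc : S ≠ {x : ZMod p | x ≠ 0}) :
    ∀ σ : Equiv.Perm (ZMod p), IsCircAut' X σ →
      ∃ a b : ZMod p, a ≠ 0 ∧ ∀ x : ZMod p, σ x = a * x + b := by
  classical
  have hp2 : 2 ≤ p := (Fact.out : p.Prime).two_le
  haveI : NeZero p := ⟨(Fact.out : p.Prime).ne_zero⟩
  obtain ⟨m, hm1, hmle, hker, hcst, hmspec⟩ := exists_m S X hS hne
  -- exclude m = p - 1
  have hm2 : m ≤ p - 2 := by
    by_contra hc
    have hmeq : m = p - 1 := by omega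
    -- then Bop kills everything of degree ≤ p - 2, in particular Dl dta
    have hdd : dgle (Dl p (dta p)) (p - 2) := by
      unfold dgle
      have h1 : (p - 2) + 1 = p - 1 := by omega
      rw [h1]
      have : ((Dl p) ^ (p - 1)) (Dl p (dta p)) = ((Dl p) ^ ((p - 1) + 1)) (dta p) := by
        rw [pow_succ (Dl p) (p - 1)]; rfl
      rw [this, Nat.sub_add_cancel (by omega : 1 ≤ p), Dl_pow_p]
      rfl
    have hBD : Bop S (Dl p (dta p)) = 0 := by
      apply (hker _).mpr
      rw [hmeq]
      exact hdd
    have hDc : Dl p (Bop S (dta p)) = 0 := by rw [← Bop_Dl_apply, hBD]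
    have hcstB := eq_cst_of_Dl_eq_zero hDc
    obtain ⟨s₀, hs₀⟩ := hne
    have hs₀0 : s₀ ≠ 0 := fun h => zero_not_mem_S S X hS (h ▸ hs₀)
    have hval : ∀ x : ZMod p, x ≠ 0 → Bop S (dta p) x = if -x ∈ S then 1 else 0 :=
      fun x hx => dta_sum_ne S X hS x hx
    have hc1 : Bop S (dta p) (-s₀) = 1 := by
      rw [hval (-s₀) (by simpa using hs₀0)]
      rw [if_pos (by simpa using hs₀)]
    have hall : ∀ u : ZMod p, u ≠ 0 → u ∈ S := by
      intro u hu
      have h1 : Bop S (dta p) (-u) = Bop S (dta p) (-s₀) := by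
        rw [hcstB]; rfl
      rw [hc1] at h1
      rw [hval (-u) (by simpa using hu)] at h1
      by_contra hnu
      rw [if_neg (by simpa using hnu)] at h1
      exact zero_ne_one h1
    apply hnc
    ext x
    constructor
    · intro hx
      exact fun h0 => zero_not_mem_S S X hS (h0 ▸ hx)
    · intro hx
      exact hall x hx
  -- invariance of degree ≤ m and degree ≤ m - 1 under automorphisms
  have Im : ∀ σ : Equiv.Perm (ZMod p), IsCircAut' X σ →
      ∀ f : Vf p, dgle f m → dgle (fun x => f (σ x)) m := by
    intro σ hσ f hf
    apply (hcst _).mp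
    rw [Bop_comp S X hS hσ]
    have h0 : dgle (Bop S f) 0 := (hcst f).mpr hf
    have hcc := eq_cst_of_Dl_eq_zero (by simpa [dgle, pow_one] using h0)
    have : (fun x => Bop S f (σ x)) = cst p (Bop S f 0) := by
      funext x
      rw [hcc]
      rfl
    rw [this]
    exact dgle_zero_iff.mpr ⟨_, rfl⟩
  have Im1 : ∀ σ : Equiv.Perm (ZMod p), IsCircAut' X σ →
      ∀ f : Vf p, dgle f (m - 1) → dgle (fun x => f (σ x)) (m - 1) := by
    intro σ hσ f hf
    apply (hker _).mp
    rw [Bop_comp S X hS hσ]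
    have h0 : Bop S f = 0 := (hker f).mpr hf
    rw [h0]
    rfl
  -- invariance of degree ≤ 1
  have Inv1 : ∀ σ : Equiv.Perm (ZMod p), IsCircAut' X σ →
      ∀ f : Vf p, dgle f 1 → dgle (fun x => f (σ x)) 1 := by
    rcases Nat.eq_or_lt_of_le hm1 with h1 | h2
    · rw [← h1] at Im
      exact Im
    · have := inv_sub X (by omega : 1 ≤ m - 1) (by omega : m - 1 < m) hm2 Im Im1
      have harith : m - (m - 1) = 1 := by omega
      rwa [harith] at this
  -- conclude affinity
  intro σ hσ
  have hid : dgle (fun x : ZMod p => x) 1 := by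
    unfold dgle
    have h1 : Dl p (fun x : ZMod p => x) = cst p 1 := by
      funext x
      show (x + 1) - x = 1
      ring
    have : ((Dl p) ^ 2) (fun x : ZMod p => x) = Dl p (Dl p (fun x : ZMod p => x)) := by
      rw [pow_two]; rfl
    rw [this, h1, Dl_cst]
  have hσ1 : dgle (fun x => σ x) 1 := Inv1 σ hσ _ hid
  have hDσ : Dl p (Dl p (fun x => σ x)) = 0 := by
    have : ((Dl p) ^ 2) (fun x => σ x) = Dl p (Dl p (fun x => σ x)) := by
      rw [pow_two]; rfl
    rw [← this]
    exact hσ1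
  have hDc := eq_cst_of_Dl_eq_zero hDσ
  set a : ZMod p := σ (0 + 1) - σ 0 with ha
  have hstep : ∀ x : ZMod p, σ (x + 1) = σ x + a := by
    intro x
    have := congrFun hDc x
    rw [Dl_apply] at this
    have h2 : σ (x + 1) - σ x = a := this
    linear_combination h2
  have hlin : ∀ x : ZMod p, σ x = a * x + σ 0 := by
    have hnat : ∀ n : ℕ, σ ((n : ℕ) : ZMod p) = a * n + σ 0 := by
      intro n
      induction n with
      | zero => simp
      | succ n ihn =>
        push_cast
        rw [hstep, ihn]
        ring
    intro x
    have hx : ((x.val : ℕ) : ZMod p) = x := ZMod.natCast_rightInverse x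
    rw [← hx, hnat]
  refine ⟨a, σ 0, ?_, hlin⟩
  intro ha0
  have h01 : σ 0 = σ 1 := by
    rw [hlin 0, hlin 1, ha0]
    ring
  haveI : Fact (1 < p) := ⟨(Fact.out : p.Prime).one_lt⟩
  exact zero_ne_one (σ.injective h01)

lemma mult_mem (hS : ∀ i j : ZMod p, X.Adj i j ↔ j - i ∈ S)
    {σ : Equiv.Perm (ZMod p)} (hσ : IsCircAut' X σ) {a b : ZMod p}
    (hab : ∀ x : ZMod p, σ x = a * x + b) :
    ∀ d : ZMod p, d ∈ S ↔ a * d ∈ S := by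
  intro d
  have h1 : X.Adj 0 d ↔ d ∈ S := by rw [hS]; simp
  have h2 : X.Adj (σ 0) (σ d) ↔ a * d ∈ S := by
    rw [hS, hab, hab]
    have : a * d + b - (a * 0 + b) = a * d := by ring
    rw [this]
  rw [← h1, ← hσ 0 d, h2]

lemma affine_aut (hS : ∀ i j : ZMod p, X.Adj i j ↔ j - i ∈ S)
    {σ : Equiv.Perm (ZMod p)} {a b : ZMod p}
    (hab : ∀ x : ZMod p, σ x = a * x + b)
    (hmul : ∀ d : ZMod p, d ∈ S ↔ a * d ∈ S) :
    IsCircAut' X σ := by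
  intro i j
  rw [hS, hS, hab, hab]
  have : a * j + b - (a * i + b) = a * (j - i) := by ring
  rw [this]
  exact (hmul (j - i)).symm

lemma image_iff_mult {a : ZMod p} (ha : a ≠ 0) :
    ((fun s => a * s) '' S = S) ↔ (∀ d : ZMod p, d ∈ S ↔ a * d ∈ S) := by
  constructor
  · intro him d
    constructor
    · intro hd
      rw [← him]
      exact ⟨d, hd, rfl⟩
    · intro had
      rw [← him] at had
      obtain ⟨s, hs, hsa⟩ := had
      have : s = d := mul_left_cancel₀ ha hsa
      exact this ▸ hs
  · intro h
    ext t
    constructor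
    · rintro ⟨s, hs, rfl⟩
      exact (h s).mp hs
    · intro ht
      refine ⟨a⁻¹ * t, ?_, ?_⟩
      · apply (h (a⁻¹ * t)).mpr
        have : a * (a⁻¹ * t) = t := by field_simp
        rw [this]
        exact ht
      · field_simp

end Graph

end CircAux

/-- `σ` is an automorphism of the graph `X`. -/
def IsCircAut {p : ℕ} (X : SimpleGraph (ZMod p)) (σ : Equiv.Perm (ZMod p)) : Prop :=
  ∀ i j : ZMod p, X.Adj (σ i) (σ j) ↔ X.Adj i j

/-- If `X₁` and `X₂` are nontrivial circulant `p`-graphs on `Z_p` with associated groups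
`E₁ = E₂`, then `Aut(X₁) = Aut(X₂)` as sets of permutations of `Z_p`. -/
theorem stmt17 {p : ℕ} [Fact p.Prime]
    (X₁ X₂ : SimpleGraph (ZMod p)) (S₁ S₂ : Set (ZMod p))
    (hS₁ : ∀ i j : ZMod p, X₁.Adj i j ↔ j - i ∈ S₁)
    (hS₂ : ∀ i j : ZMod p, X₂.Adj i j ↔ j - i ∈ S₂)
    (hne₁ : S₁.Nonempty) (hnc₁ : S₁ ≠ {x : ZMod p | x ≠ 0})
    (hne₂ : S₂.Nonempty) (hnc₂ : S₂ ≠ {x : ZMod p | x ≠ 0})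
    (E₁ E₂ : Subgroup (ZMod p)ˣ)
    (hE₁ : ∀ a : (ZMod p)ˣ, a ∈ E₁ ↔ (fun s => (a : ZMod p) * s) '' S₁ = S₁)
    (hE₂ : ∀ a : (ZMod p)ˣ, a ∈ E₂ ↔ (fun s => (a : ZMod p) * s) '' S₂ = S₂)
    (hEE : E₁ = E₂) :
    ∀ σ : Equiv.Perm (ZMod p), IsCircAut X₁ σ ↔ IsCircAut X₂ σ := by
  have key : ∀ (X X' : SimpleGraph (ZMod p)) (S S' : Set (ZMod p))
      (hS : ∀ i j : ZMod p, X.Adj i j ↔ j - i ∈ S)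
      (hS' : ∀ i j : ZMod p, X'.Adj i j ↔ j - i ∈ S')
      (hne : S.Nonempty) (hnc : S ≠ {x : ZMod p | x ≠ 0})
      (E E' : Subgroup (ZMod p)ˣ)
      (hE : ∀ a : (ZMod p)ˣ, a ∈ E ↔ (fun s => (a : ZMod p) * s) '' S = S)
      (hE' : ∀ a : (ZMod p)ˣ, a ∈ E' ↔ (fun s => (a : ZMod p) * s) '' S' = S')
      (hEE' : E = E') (σ : Equiv.Perm (ZMod p)),
      IsCircAut X σ → IsCircAut X' σ := by
    intro X X' S S' hS hS' hne hnc E E' hE hE' hEE' σ hσ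
    have hσ' : IsCircAut' X σ := hσ
    obtain ⟨a, b, ha, hab⟩ := aut_affine S X hS hne hnc σ hσ'
    have hmul : ∀ d : ZMod p, d ∈ S ↔ a * d ∈ S := mult_mem S X hS hσ' hab
    have him : (fun s => a * s) '' S = S := (image_iff_mult S ha).mpr hmul
    set au : (ZMod p)ˣ := Units.mk0 a ha with hau
    have hmem : au ∈ E := (hE au).mpr (by simpa [hau] using him)
    have hmem' : au ∈ E' := hEE' ▸ hmem
    have him' : (fun s => a * s) '' S' = S' := by simpa [hau] using (hE' au).mp hmem'
    have hmul' : ∀ d : ZMod p, d ∈ S' ↔ a * d ∈ S' := (image_iff_mult S' ha).mp him'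
    exact affine_aut S' X' hS' hab hmul'
  intro σ
  constructor
  · exact key X₁ X₂ S₁ S₂ hS₁ hS₂ hne₁ hnc₁ E₁ E₂ hE₁ hE₂ hEE σ
  · exact key X₂ X₁ S₂ S₁ hS₂ hS₁ hne₂ hnc₂ E₂ E₁ hE₂ hE₁ hEE.symm σ
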